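/- The mould dupal, defined by dupal^m(x_1,...,x_m) = (B_m/m!) · (1/(x_1···x_m)) · Σ_{k=0}^{m-1} (−1)^k C(m−1,k) x_{k+1} for m ≥ 1 (where B_m are Bernoulli numbers), is alternal: for all p,q ≥ 1, the sum of dupal^{p+q} over all shuffles of (x_1,...,x_p) with (x_{p+1},...,x_{p+q}) is zero. -/

import Mathlib

open scoped BigOperators

/-- All shuffle interleavings of two lists, preserving the relative order of each. -/
def shuffles {α : Type*} : List α → List α → List (List α)
  | [], ys => [ys]
  | xs, [] => [xs]
  | x :: xs, y :: ys =>
      ((shuffles xs (y :: ys)).map (x :: ·)) ++ ((shuffles (x :: xs) ys).map (y :: ·))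
termination_by xs ys => xs.length + ys.length
decreasing_by all_goals (simp; try omega)

variable {K : Type*} [Field K]

/-- The shuffle sum of a mould `M` over all interleavings of `a` and `b`. -/
def shSum (M : List K → K) (a b : List K) : K := ((shuffles a b).map M).sum

/-- The mould (concatenation-deconcatenation) product. -/
def mmul (M N : List K → K) (w : List K) : K :=
  ∑ k ∈ Finset.range (w.length + 1), M (w.take k) * N (w.drop k)

/-- The unit mould: `1` in length `0` and `0` otherwise. -/
def one : List K → K := fun l => match l with | [] => 1 | _ => 0

/-- The mould `dupal`:
`dupal^m(x_1,…,x_m) = (B_m/m!) · (1/(x_1⋯x_m)) · Σ_{k=0}^{m-1} (−1)^k C(m−1,k) x_{k+1}`. -/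
noncomputable def dupal {K : Type*} [Field K] (l : List K) : K :=
  ((bernoulli l.length / (Nat.factorial l.length : ℚ) : ℚ) : K) * (l.prod)⁻¹ *
    ∑ k ∈ Finset.range l.length, (-1 : K) ^ k * ((l.length - 1).choose k : K) * l.getD k 0

open Finset

lemma shuffles_perm {α : Type*} : ∀ (a b : List α), ∀ σ ∈ shuffles a b, σ.Perm (a ++ b) := by
  intro a b
  induction a, b using shuffles.induct with
  | case1 ys => simp [shuffles]
  | case2 xs h => simp [shuffles]
  | case3 x xs y ys ih1 ih2 =>
    intro σ hσ
    rw [shuffles] at hσ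
    simp only [List.mem_append, List.mem_map] at hσ
    rcases hσ with ⟨τ, hτ, rfl⟩ | ⟨τ, hτ, rfl⟩
    · exact (ih1 τ hτ).cons x
    · exact ((ih2 τ hτ).cons y).trans List.perm_middle.symm

lemma length_shuffles {α : Type*} : ∀ (a b : List α),
    (shuffles a b).length = (a.length + b.length).choose a.length := by
  intro a b
  induction a, b using shuffles.induct with
  | case1 ys => simp [shuffles]
  | case2 xs h => simp [shuffles]
  | case3 x xs y ys ih1 ih2 =>
    rw [shuffles]
    simp only [List.length_append, List.length_map, ih1, ih2, List.length_cons]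
    have e1 : xs.length + (ys.length + 1) = xs.length + ys.length + 1 := by omega
    have e2 : xs.length + 1 + ys.length = xs.length + ys.length + 1 := by omega
    rw [e1, e2, show xs.length + 1 + (ys.length + 1) = (xs.length + ys.length + 1) + 1 from by
      omega]
    exact (Nat.choose_succ_succ' (xs.length + ys.length + 1) xs.length).symm

/-- trinomial revision, valid for all naturals with truncated subtraction -/
lemma trinom (N j s : ℕ) : N.choose j * (N - j).choose s = N.choose s * (N - s).choose j := by
  by_cases h : j + s ≤ N
  · have h1 := Nat.choose_mul (n := N) (k := j + s) (s := j) (Nat.le_add_right _ _)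
    have h2 := Nat.choose_mul (n := N) (k := j + s) (s := s) (Nat.le_add_left _ _)
    have h3 : (j + s).choose j = (j + s).choose s := by
      rw [← Nat.choose_symm (Nat.le_add_right _ _)]; congr 1; omega
    rw [Nat.add_sub_cancel_left] at h1
    rw [show j + s - s = j by omega] at h2
    rw [h3] at h1
    omega
  · rcases le_or_gt j N with hj | hj
    · rcases le_or_gt s N with hs | hs
      · rw [Nat.choose_eq_zero_of_lt (show N - j < s by omega),
          Nat.choose_eq_zero_of_lt (show N - s < j by omega)]
        ring
      · rw [Nat.choose_eq_zero_of_lt hs, Nat.choose_eq_zero_of_lt (show N - j < s by omega)]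
        ring
    · rw [Nat.choose_eq_zero_of_lt hj, Nat.choose_eq_zero_of_lt (show N - s < j by omega)]
      ring

/-- the key binomial identity -/
lemma key (p q i : ℕ) (hp : 1 ≤ p) (hq : 1 ≤ q) (hi : i < p) :
    ∑ k ∈ range (p + q), ((-1 : ℤ) ^ k *
      ((p + q - 1).choose k * k.choose i * ((p + q - 1 - k).choose (p - 1 - i)) : ℕ)) = 0 := by
  set m := p + q with hm
  set n := m - 1 with hn
  have hstep : ∀ k ∈ Finset.Ico i m, ((-1 : ℤ) ^ k *
      (n.choose k * k.choose i * ((n - k).choose (p - 1 - i)) : ℕ))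
      = ((-1 : ℤ) ^ i * (n.choose i * (n - i).choose (p - 1 - i) : ℕ)) *
        ((-1 : ℤ) ^ (k - i) * (q.choose (k - i) : ℕ)) := by
    intro k hk
    simp only [Finset.mem_Ico] at hk
    have hkn : k ≤ n := by omega
    have h1 : n.choose k * k.choose i = n.choose i * (n - i).choose (k - i) :=
      Nat.choose_mul hk.1
    have h2 : (n - i).choose (k - i) * ((n - i) - (k - i)).choose (p - 1 - i)
        = (n - i).choose (p - 1 - i) * ((n - i) - (p - 1 - i)).choose (k - i) :=
      trinom _ _ _
    have h3 : (n - i) - (k - i) = n - k := by omega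
    have h4 : (n - i) - (p - 1 - i) = q := by omega
    rw [h3, h4] at h2
    have h5 : (-1 : ℤ) ^ k = (-1 : ℤ) ^ i * (-1 : ℤ) ^ (k - i) := by
      rw [← pow_add]; congr 1; omega
    have h6 : n.choose k * k.choose i * ((n - k).choose (p - 1 - i))
        = n.choose i * ((n - i).choose (p - 1 - i) * q.choose (k - i)) := by
      rw [h1, mul_assoc, h2]
    rw [h6, h5]
    push_cast
    ring
  -- split off the first i terms (which vanish), reindex, then alternating sum
  rw [Finset.range_eq_Ico, ← Finset.sum_Ico_consecutive _ (Nat.zero_le i) (by omega : i ≤ m)]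
  have hz : ∑ k ∈ Finset.Ico 0 i, ((-1 : ℤ) ^ k *
      (n.choose k * k.choose i * ((n - k).choose (p - 1 - i)) : ℕ)) = 0 := by
    apply Finset.sum_eq_zero
    intro k hk
    simp only [Finset.mem_Ico] at hk
    rw [Nat.choose_eq_zero_of_lt hk.2]
    push_cast; ring
  rw [hz, zero_add, Finset.sum_congr rfl hstep, ← Finset.mul_sum]
  have : ∑ k ∈ Finset.Ico i m, ((-1 : ℤ) ^ (k - i) * (q.choose (k - i) : ℕ)) = 0 := by
    rw [Finset.sum_Ico_eq_sum_range]
    simp only [Nat.add_sub_cancel_left]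
    have hsub : range (q + 1) ⊆ range (m - i) := by
      apply Finset.range_subset_range.2; omega
    rw [← Finset.sum_subset hsub (by
      intro k _ hk
      simp only [Finset.mem_range, not_lt] at hk
      rw [Nat.choose_eq_zero_of_lt (by omega)]
      push_cast; ring)]
    exact Int.alternating_sum_range_choose_of_ne (by omega)
  rw [this, mul_zero]

lemma step_sum {K : Type*} [CommRing K] (x : K) (xs : List K) (k M : ℕ) :
    ∑ i ∈ range (xs.length + 1),
        (((k+1).choose i * M.choose (xs.length - i) : ℕ) : K) * (x :: xs).getD i 0
    = (∑ i ∈ range xs.length,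
        ((k.choose i * M.choose (xs.length - 1 - i) : ℕ) : K) * xs.getD i 0)
    + ∑ i ∈ range (xs.length + 1),
        ((k.choose i * M.choose (xs.length - i) : ℕ) : K) * (x :: xs).getD i 0 := by
  rw [Finset.sum_range_succ' (fun i => (((k+1).choose i * M.choose (xs.length - i) : ℕ) : K)
      * (x :: xs).getD i 0) xs.length,
    Finset.sum_range_succ' (fun i => ((k.choose i * M.choose (xs.length - i) : ℕ) : K)
      * (x :: xs).getD i 0) xs.length]
  simp only [List.getD_cons_succ, List.getD_cons_zero, Nat.choose_zero_right, Nat.sub_zero]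
  have h : ∀ i ∈ range xs.length,
      (((k+1).choose (i+1) * M.choose (xs.length - (i+1)) : ℕ) : K) * xs.getD i 0
      = ((k.choose i * M.choose (xs.length - 1 - i) : ℕ) : K) * xs.getD i 0
        + ((k.choose (i+1) * M.choose (xs.length - (i+1)) : ℕ) : K) * xs.getD i 0 := by
    intro i _
    have hsub : xs.length - (i + 1) = xs.length - 1 - i := by omega
    rw [hsub, Nat.choose_succ_succ]
    push_cast; ring
  rw [Finset.sum_congr rfl h, Finset.sum_add_distrib]
  ring

lemma shuffles_nil_right {α : Type*} (xs : List α) : shuffles xs [] = [xs] := by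
  cases xs <;> simp [shuffles]

lemma colSum {K : Type*} [CommRing K] : ∀ (a b : List K), ∀ k, k < a.length + b.length →
    ((shuffles a b).map (fun σ => σ.getD k 0)).sum =
      (∑ i ∈ range a.length,
        ((k.choose i * (a.length + b.length - 1 - k).choose (a.length - 1 - i) : ℕ) : K) * a.getD i 0)
    + (∑ j ∈ range b.length,
        ((k.choose j * (a.length + b.length - 1 - k).choose (b.length - 1 - j) : ℕ) : K) * b.getD j 0) := by
  intro a b
  induction a, b using shuffles.induct with
  | case1 ys =>
    intro k hk
    simp only [List.length_nil, Nat.zero_add, List.length_nil] at hk ⊢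
    rw [shuffles]
    simp only [List.map_cons, List.map_nil, List.sum_cons, List.sum_nil, add_zero,
      Finset.range_zero, Finset.sum_empty, zero_add]
    rw [Finset.sum_eq_single_of_mem k (Finset.mem_range.2 hk) ?_]
    · simp [Nat.choose_self]
    · intro j hj hjk
      rcases lt_or_gt_of_ne hjk with h | h
      · rw [Nat.choose_eq_zero_of_lt (show ys.length - 1 - k < ys.length - 1 - j by omega)]
        push_cast; ring
      · rw [Nat.choose_eq_zero_of_lt h]
        push_cast; ring
  | case2 xs hxs =>
    intro k hk
    simp only [List.length_nil, Nat.add_zero] at hk ⊢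
    rw [shuffles_nil_right]
    simp only [List.map_cons, List.map_nil, List.sum_cons, List.sum_nil, add_zero,
      Finset.range_zero, Finset.sum_empty]
    rw [Finset.sum_eq_single_of_mem k (Finset.mem_range.2 hk) ?_]
    · simp [Nat.choose_self]
    · intro j hj hjk
      rcases lt_or_gt_of_ne hjk with h | h
      · rw [Nat.choose_eq_zero_of_lt (show xs.length - 1 - k < xs.length - 1 - j by omega)]
        push_cast; ring
      · rw [Nat.choose_eq_zero_of_lt h]
        push_cast; ring
  | case3 x xs y ys ih1 ih2 =>
    intro k hk
    rw [shuffles]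
    simp only [List.map_append, List.sum_append, List.map_map, List.length_cons] at *
    rcases k with _ | k
    · -- k = 0
      simp only [Function.comp_def, List.getD_cons_zero]
      rw [List.map_const', List.map_const', List.sum_replicate, List.sum_replicate,
        length_shuffles, length_shuffles]
      have e1 : xs.length + 1 + (ys.length + 1) - 1 = xs.length + (ys.length + 1) := by omega
      simp only [Nat.sub_zero, Nat.add_sub_cancel, e1, List.length_cons]
      rw [Finset.sum_eq_single_of_mem 0 (Finset.mem_range.2 (Nat.succ_pos _))
          (fun j _ hj => by
            rw [Nat.choose_eq_zero_of_lt (Nat.pos_of_ne_zero hj)]; push_cast; ring),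
        Finset.sum_eq_single_of_mem 0 (Finset.mem_range.2 (Nat.succ_pos _))
          (fun j _ hj => by
            rw [Nat.choose_eq_zero_of_lt (Nat.pos_of_ne_zero hj)]; push_cast; ring)]
      simp only [List.getD_cons_zero, Nat.choose_zero_right, Nat.sub_zero, one_mul,
        nsmul_eq_mul]
      have e2 : (xs.length + 1 + ys.length).choose (xs.length + 1)
          = (xs.length + (ys.length + 1)).choose ys.length := by
        rw [Nat.choose_symm_add]
        congr 1
      rw [e2]
    · -- k = k'+1
      simp only [Function.comp_def, List.getD_cons_succ]
      rw [ih1 k (by omega), ih2 k (by omega)]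
      simp only [List.length_cons,
        show xs.length + (ys.length + 1) - 1 - k = xs.length + ys.length - k from by omega,
        show xs.length + 1 + ys.length - 1 - k = xs.length + ys.length - k from by omega,
        show xs.length + 1 + (ys.length + 1) - 1 - (k + 1) = xs.length + ys.length - k from by omega,
        Nat.add_sub_cancel]
      rw [step_sum x xs k (xs.length + ys.length - k), step_sum y ys k (xs.length + ys.length - k)]
      ring

lemma list_sum_map_sum {K : Type*} [CommRing K] (l : List (List K)) (s : Finset ℕ)
    (f : ℕ → List K → K) :
    (l.map (fun σ => ∑ k ∈ s, f k σ)).sum = ∑ k ∈ s, (l.map (fun σ => f k σ)).sum := by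
  induction l with
  | nil => simp
  | cons hd tl ih => simp [ih, Finset.sum_add_distrib]

lemma part_zero {K : Type*} [Field K] (m p : ℕ) (hp : 1 ≤ p) (hpm : p < m) (c : List K) :
    ∑ k ∈ range m, (-1 : K) ^ k * ((m - 1).choose k : K) *
      (∑ i ∈ range p, ((k.choose i * (m - 1 - k).choose (p - 1 - i) : ℕ) : K) * c.getD i 0)
    = 0 := by
  obtain ⟨q, rfl⟩ : ∃ q, m = p + q := ⟨m - p, by omega⟩
  have hq : 1 ≤ q := by omega
  rw [Finset.sum_congr rfl (fun k _ => Finset.mul_sum _ _ _)]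
  rw [Finset.sum_comm]
  apply Finset.sum_eq_zero
  intro i hi
  have hkey := key p q i hp hq (Finset.mem_range.1 hi)
  have cast_eq : ∑ k ∈ range (p + q), (-1 : K) ^ k * ((p + q - 1).choose k : K) *
        ((k.choose i * (p + q - 1 - k).choose (p - 1 - i) : ℕ) : K)
      = (Int.cast (∑ k ∈ range (p + q), ((-1 : ℤ) ^ k *
          ((p + q - 1).choose k * k.choose i * ((p + q - 1 - k).choose (p - 1 - i)) : ℕ))) : K) := by
    push_cast
    apply Finset.sum_congr rfl
    intros; ring
  have hkeyK : (Int.cast (∑ k ∈ range (p + q), ((-1 : ℤ) ^ k *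
      ((p + q - 1).choose k * k.choose i * ((p + q - 1 - k).choose (p - 1 - i)) : ℕ))) : K) = 0 := by
    rw [hkey]; exact Int.cast_zero
  calc ∑ k ∈ range (p + q), (-1 : K) ^ k * ((p + q - 1).choose k : K) *
        (((k.choose i * (p + q - 1 - k).choose (p - 1 - i) : ℕ) : K) * c.getD i 0)
      = (∑ k ∈ range (p + q), (-1 : K) ^ k * ((p + q - 1).choose k : K) *
        ((k.choose i * (p + q - 1 - k).choose (p - 1 - i) : ℕ) : K)) * c.getD i 0 := by
        rw [Finset.sum_mul]
        apply Finset.sum_congr rfl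
        intros; ring
    _ = 0 := by rw [cast_eq, hkeyK, zero_mul]

/-- `dupal` is alternal. -/
theorem stmt1 {K : Type*} [Field K] [CharZero K] (a b : List K) (ha : a ≠ []) (hb : b ≠ []) :
    shSum (dupal : List K → K) a b = 0 := by
  have hp : 1 ≤ a.length := List.length_pos_iff.2 ha
  have hq : 1 ≤ b.length := List.length_pos_iff.2 hb
  have hσ : ∀ σ ∈ shuffles a b, dupal σ =
      ((bernoulli (a.length + b.length) / (Nat.factorial (a.length + b.length) : ℚ) : ℚ) : K) *
        ((a ++ b).prod)⁻¹ *
      ∑ k ∈ range (a.length + b.length),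
        (-1 : K) ^ k * ((a.length + b.length - 1).choose k : K) * σ.getD k 0 := by
    intro σ hσ
    have hperm := shuffles_perm a b σ hσ
    have hlen : σ.length = a.length + b.length := by rw [hperm.length_eq]; simp
    have hprod : σ.prod = (a ++ b).prod := hperm.prod_eq
    rw [dupal, hlen, hprod]
  rw [shSum, List.map_congr_left hσ, List.sum_map_mul_left,
    list_sum_map_sum (shuffles a b) (range (a.length + b.length))
      (fun k σ => (-1 : K) ^ k * ((a.length + b.length - 1).choose k : K) * σ.getD k 0)]
  have hcol : ∀ k ∈ range (a.length + b.length),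
      ((shuffles a b).map (fun σ =>
        (-1 : K) ^ k * ((a.length + b.length - 1).choose k : K) * σ.getD k 0)).sum
      = (-1 : K) ^ k * ((a.length + b.length - 1).choose k : K) *
        ((∑ i ∈ range a.length,
          ((k.choose i * (a.length + b.length - 1 - k).choose (a.length - 1 - i) : ℕ) : K)
            * a.getD i 0)
        + (∑ j ∈ range b.length,
          ((k.choose j * (a.length + b.length - 1 - k).choose (b.length - 1 - j) : ℕ) : K)
            * b.getD j 0)) := by
    intro k hk
    rw [List.sum_map_mul_left (shuffles a b) (fun σ => σ.getD k 0)
      ((-1 : K) ^ k * ((a.length + b.length - 1).choose k : K)),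
      colSum a b k (Finset.mem_range.1 hk)]
  rw [Finset.sum_congr rfl hcol]
  simp only [mul_add]
  rw [Finset.sum_add_distrib,
    part_zero (a.length + b.length) a.length hp (by omega) a,
    part_zero (a.length + b.length) b.length hq (by omega) b,
    add_zero, mul_zero]
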